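/- For integers m, n ≥ k+1 with k ≥ 2, let A ∈ ℝ^{m×n} be the matrix with entries A_{ii} = k+1 for 1 ≤ i ≤ k, A_{ij} = k+1 whenever both i > k and j > k, and A_{ij} = −1 otherwise, partitioned as A = [[A11, A12],[A21, A22]] with A11 = A(1:k,1:k). Then: (a) the Schur complement S(A11) = A22 − A21·A11⁻¹·A12 equals ((k+2)/2)·J, where J ∈ ℝ^{(m−k)×(n−k)} is the all-ones matrix, so σ_1(S(A11)) = ((k+2)/2)·√((m−k)(n−k)); (b) σ_{k+1}(A) ≤ 2; and consequently (c) σ_1(A − A_k) ≥ ((k+2)/4)·√((m−k)(n−k))·σ_{k+1}(A), where A_k = [[A11, A12],[A21, A21·A11⁻¹·A12]]. -/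

import Mathlib

open Matrix

/-- The spectral norm (`‖·‖₂`, largest singular value) of a real matrix. -/
noncomputable def specNorm {m n : Type*} [Fintype m] [Fintype n] [DecidableEq n]
    (A : Matrix m n ℝ) : ℝ :=
  ‖LinearMap.toContinuousLinearMap (Matrix.toEuclideanLin A)‖

/-- `sval A j` is the `j`-th largest singular value of `A` (1-indexed), characterized as the
distance, in the spectral norm, from `A` to the set of matrices of rank `< j`. -/
noncomputable def sval {m n : Type*} [Fintype m] [Fintype n] [DecidableEq n]
    (A : Matrix m n ℝ) (j : ℕ) : ℝ :=
  sInf {x : ℝ | ∃ B : Matrix m n ℝ, B.rank < j ∧ x = specNorm (A - B)}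

/-- The volume of a matrix: the product of its singular values. -/
noncomputable def vol {m n : Type*} [Fintype m] [Fintype n] [DecidableEq n]
    (A : Matrix m n ℝ) : ℝ :=
  ∏ j ∈ Finset.Icc 1 (min (Fintype.card m) (Fintype.card n)), sval A j

/-- `DiffOne b r` : `r` is an injective selection of indices whose image (index set)
differs from the index set selected by `b` in at most one element. -/
def DiffOne {ι α : Type*} [Fintype ι] [DecidableEq α] (b r : ι → α) : Prop :=
  Function.Injective r ∧ (Finset.univ.image r \ Finset.univ.image b).card ≤ 1

noncomputable def egA11 (k : ℕ) : Matrix (Fin k) (Fin k) ℝ :=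
  Matrix.of fun i j => if i = j then (k : ℝ) + 1 else -1

noncomputable def egA12 (k n' : ℕ) : Matrix (Fin k) (Fin n') ℝ :=
  Matrix.of fun _ _ => -1

noncomputable def egA21 (k m' : ℕ) : Matrix (Fin m') (Fin k) ℝ :=
  Matrix.of fun _ _ => -1

noncomputable def egA22 (k m' n' : ℕ) : Matrix (Fin m') (Fin n') ℝ :=
  Matrix.of fun _ _ => (k : ℝ) + 1

noncomputable def egA (k m' n' : ℕ) : Matrix (Fin k ⊕ Fin m') (Fin k ⊕ Fin n') ℝ :=
  Matrix.fromBlocks (egA11 k) (egA12 k n') (egA21 k m') (egA22 k m' n')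

/-! ### Auxiliary lemmas -/

section Aux

lemma specNorm_nonneg {m n : Type*} [Fintype m] [Fintype n] [DecidableEq n]
    (A : Matrix m n ℝ) : 0 ≤ specNorm A := norm_nonneg _

lemma sval_nonneg {m n : Type*} [Fintype m] [Fintype n] [DecidableEq n]
    (A : Matrix m n ℝ) (j : ℕ) : 0 ≤ sval A j := by
  apply Real.sInf_nonneg
  rintro x ⟨B, -, rfl⟩; exact specNorm_nonneg _

lemma sval_le {m n : Type*} [Fintype m] [Fintype n] [DecidableEq n]
    (A B : Matrix m n ℝ) (j : ℕ) (h : B.rank < j) : sval A j ≤ specNorm (A - B) := by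
  apply csInf_le
  · exact ⟨0, by rintro x ⟨B, -, rfl⟩; exact specNorm_nonneg _⟩
  · exact ⟨B, h, rfl⟩

lemma rank_lt_one {m n : Type*} [Fintype m] [Fintype n] [DecidableEq n]
    (B : Matrix m n ℝ) (h : B.rank < 1) : B = 0 := by
  rw [Nat.lt_one_iff, Matrix.rank] at h
  have : LinearMap.range B.mulVecLin = ⊥ := Submodule.finrank_eq_zero.mp h
  rw [LinearMap.range_eq_bot] at this
  ext i j
  have := congrFun (congrFun (congrArg DFunLike.coe this) (Pi.single j 1)) i
  simpa [Matrix.mulVecLin, Matrix.mulVec_single] using this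

lemma sval_one {m n : Type*} [Fintype m] [Fintype n] [DecidableEq n]
    (A : Matrix m n ℝ) : sval A 1 = specNorm A := by
  have : {x : ℝ | ∃ B : Matrix m n ℝ, B.rank < 1 ∧ x = specNorm (A - B)} = {specNorm A} := by
    ext x
    constructor
    · rintro ⟨B, hB, rfl⟩
      simp [rank_lt_one B hB]
    · rintro rfl
      exact ⟨0, by simp [Matrix.rank_zero], by simp⟩
  rw [sval, this, csInf_singleton]

lemma specNorm_le_bound {m n : Type*} [Fintype m] [Fintype n] [DecidableEq n]
    (A : Matrix m n ℝ) (c : ℝ) (hc : 0 ≤ c)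
    (h : ∀ x : EuclideanSpace ℝ n, ‖Matrix.toEuclideanLin A x‖ ≤ c * ‖x‖) :
    specNorm A ≤ c :=
  ContinuousLinearMap.opNorm_le_bound _ hc h

lemma le_specNorm {m n : Type*} [Fintype m] [Fintype n] [DecidableEq n]
    (A : Matrix m n ℝ) (x : EuclideanSpace ℝ n) :
    ‖Matrix.toEuclideanLin A x‖ ≤ specNorm A * ‖x‖ :=
  ContinuousLinearMap.le_opNorm (LinearMap.toContinuousLinearMap (Matrix.toEuclideanLin A)) x

lemma eunorm_sq {n : Type*} [Fintype n] (x : EuclideanSpace ℝ n) :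
    ‖x‖ ^ 2 = ∑ j, (x j) ^ 2 := by
  rw [EuclideanSpace.norm_eq, Real.sq_sqrt (by positivity)]
  simp [sq_abs]

lemma toEuc_apply {m n : Type*} [Fintype m] [Fintype n] [DecidableEq n]
    (A : Matrix m n ℝ) (x : EuclideanSpace ℝ n) (i : m) :
    (Matrix.toEuclideanLin A x) i = ∑ j, A i j * x j := rfl

/-- The spectral norm of the rank-one matrix `u wᵀ`. -/
lemma specNorm_rankOne {m n : Type*} [Fintype m] [Fintype n] [DecidableEq n]
    (u : m → ℝ) (w : n → ℝ) :
    specNorm (Matrix.of fun i j => u i * w j) =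
      Real.sqrt (∑ i, u i ^ 2) * Real.sqrt (∑ j, w j ^ 2) := by
  set su := Real.sqrt (∑ i, u i ^ 2) with hsu
  set sw := Real.sqrt (∑ j, w j ^ 2) with hsw
  have hsu0 : 0 ≤ su := Real.sqrt_nonneg _
  have hsw0 : 0 ≤ sw := Real.sqrt_nonneg _
  have hsu2 : su ^ 2 = ∑ i, u i ^ 2 := Real.sq_sqrt (by positivity)
  have hsw2 : sw ^ 2 = ∑ j, w j ^ 2 := Real.sq_sqrt (by positivity)
  apply le_antisymm
  · apply specNorm_le_bound _ _ (by positivity)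
    intro x
    have key : ‖Matrix.toEuclideanLin (Matrix.of fun i j => u i * w j) x‖ ^ 2
        ≤ (su * sw * ‖x‖) ^ 2 := by
      rw [eunorm_sq]
      have happ : ∀ i, (∑ j, (Matrix.of fun i j => u i * w j) i j * x j)
          = u i * ∑ j, w j * x j := by
        intro i
        rw [Finset.mul_sum]
        congr 1; ext j; simp [Matrix.of_apply]; ring
      calc ∑ i, (∑ j, (Matrix.of fun i j => u i * w j) i j * x j) ^ 2
          = (∑ i, u i ^ 2) * (∑ j, w j * x j) ^ 2 := by
            simp_rw [happ, mul_pow, ← Finset.sum_mul]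
        _ ≤ (∑ i, u i ^ 2) * ((∑ j, w j ^ 2) * ∑ j, (x j) ^ 2) := by
            apply mul_le_mul_of_nonneg_left (Finset.sum_mul_sq_le_sq_mul_sq _ _ _) (by positivity)
        _ = (su * sw * ‖x‖) ^ 2 := by
            rw [← eunorm_sq x, ← hsu2, ← hsw2]; ring
    have h1 : (0:ℝ) ≤ ‖Matrix.toEuclideanLin (Matrix.of fun i j => u i * w j) x‖ := norm_nonneg _
    have h2 : (0:ℝ) ≤ su * sw * ‖x‖ := by positivity
    nlinarith
  · rcases eq_or_ne sw 0 with h0 | h0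
    · rw [h0, mul_zero]; exact norm_nonneg _
    · have hswpos : 0 < sw := lt_of_le_of_ne hsw0 (Ne.symm h0)
      set x : EuclideanSpace ℝ n := (WithLp.equiv 2 (n → ℝ)).symm w with hx
      have hxj : ∀ j, x j = w j := fun j => rfl
      have hxnorm : ‖x‖ = sw := by
        rw [EuclideanSpace.norm_eq]; rw [hsw]; congr 1
        simp [hxj, sq_abs]
      have hAx : ‖Matrix.toEuclideanLin (Matrix.of fun i j => u i * w j) x‖ = su * sw ^ 2 := by
        have : ∀ i, (Matrix.toEuclideanLin (Matrix.of fun i j => u i * w j) x) i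
            = u i * ∑ j, w j ^ 2 := by
          intro i
          rw [toEuc_apply, Finset.mul_sum]
          congr 1; ext j; simp [Matrix.of_apply, hxj]; ring
        rw [EuclideanSpace.norm_eq]
        have : ∀ i, ‖(Matrix.toEuclideanLin (Matrix.of fun i j => u i * w j) x) i‖ ^ 2
            = u i ^ 2 * (∑ j, w j ^ 2) ^ 2 := by
          intro i; rw [Real.norm_eq_abs, sq_abs, this i]
          ring
        rw [Finset.sum_congr rfl fun i _ => this i, ← Finset.sum_mul,
          Real.sqrt_mul (by positivity), Real.sqrt_sq (by positivity), ← hsu, ← hsw2]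
      have := le_specNorm (Matrix.of fun i j => u i * w j) x
      rw [hAx, hxnorm] at this
      exact le_of_mul_le_mul_right (by nlinarith :
        su * sw * sw ≤ specNorm (Matrix.of fun i j => u i * w j) * sw) hswpos

noncomputable def invB (k : ℕ) : Matrix (Fin k) (Fin k) ℝ :=
  Matrix.of fun i j => ((if i = j then (1:ℝ) else 0) + 1/2) / ((k:ℝ) + 2)

lemma sum_ite1 {k : ℕ} (i : Fin k) (a c : ℝ) :
    ∑ l : Fin k, ((if l = i then a else 0) + c) = a + k * c := by
  rw [Finset.sum_add_distrib, Finset.sum_ite_eq', Finset.sum_const]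
  simp [Finset.card_univ]

lemma sum_ite2 {k : ℕ} (i j : Fin k) (a b c : ℝ) :
    ∑ l : Fin k, ((if l = i then a else 0) + (if l = j then b else 0) + c)
      = a + b + k * c := by
  rw [Finset.sum_add_distrib, Finset.sum_add_distrib, Finset.sum_ite_eq', Finset.sum_ite_eq',
    Finset.sum_const]
  simp [Finset.card_univ]

lemma egA11_inv (k : ℕ) : (egA11 k)⁻¹ = invB k := by
  apply Matrix.inv_eq_right_inv
  ext i j
  rw [Matrix.mul_apply]
  by_cases hij : i = j
  · subst hij
    have step : ∀ l ∈ Finset.univ, egA11 k i l * invB k l i =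
        ((if l = i then (((k:ℝ)+1)*(3/2) + 1/2)/((k:ℝ)+2) else 0) + (-(1/2))/((k:ℝ)+2)) := by
      intro l _
      simp only [egA11, invB, Matrix.of_apply]
      by_cases h : l = i
      · subst h; simp; ring
      · simp [h, Ne.symm h]; ring
    rw [Finset.sum_congr rfl step, sum_ite1]
    simp only [Matrix.one_apply_eq]
    field_simp
    ring
  · have step : ∀ l ∈ Finset.univ, egA11 k i l * invB k l j =
        ((if l = i then (1:ℝ)/2 else 0) + (if l = j then -1/((k:ℝ)+2) else 0)
          + (-(1/2))/((k:ℝ)+2)) := by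
      intro l _
      simp only [egA11, invB, Matrix.of_apply]
      by_cases h1 : l = i
      · subst h1
        simp [hij]
        field_simp
        ring
      · by_cases h2 : l = j
        · subst h2
          have h1' : i ≠ l := fun h => h1 h.symm
          simp [h1, h1']
          ring
        · have h1' : i ≠ l := fun h => h1 h.symm
          simp [h1, h2, h1']
          ring
    rw [Finset.sum_congr rfl step, sum_ite2]
    simp only [Matrix.one_apply_ne hij]
    field_simp
    ring

lemma schur_eq (k m' n' : ℕ) :
    egA22 k m' n' - egA21 k m' * (egA11 k)⁻¹ * egA12 k n' =
      Matrix.of fun _ _ => ((k : ℝ) + 2) / 2 := by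
  rw [egA11_inv]
  have hmul : egA21 k m' * invB k = Matrix.of fun _ _ => -((1 + (k:ℝ)/2) / ((k:ℝ)+2)) := by
    ext i p
    rw [Matrix.mul_apply]
    have step : ∀ l ∈ Finset.univ, egA21 k m' i l * invB k l p =
        ((if l = p then -(((k:ℝ)+2))⁻¹ else 0) + (-(1/2))/((k:ℝ)+2)) := by
      intro l _
      simp only [egA21, invB, Matrix.of_apply]
      by_cases h : l = p <;> simp [h] <;> ring
    rw [Finset.sum_congr rfl step, sum_ite1]
    simp only [Matrix.of_apply]
    field_simp
    ring
  rw [hmul]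
  ext i j
  rw [Matrix.sub_apply, Matrix.mul_apply]
  have step : ∀ p ∈ Finset.univ, (Matrix.of fun _ _ => -((1 + (k:ℝ)/2) / ((k:ℝ)+2))) i p
      * egA12 k n' p j = (1 + (k:ℝ)/2) / ((k:ℝ)+2) := by
    intro p _; simp [egA12]
  rw [Finset.sum_congr rfl step, Finset.sum_const]
  simp only [egA22, Matrix.of_apply, Finset.card_univ, Fintype.card_fin, nsmul_eq_mul]
  field_simp
  ring

lemma specNorm_const (m' n' : ℕ) (c : ℝ) (hc : 0 ≤ c) :
    specNorm (Matrix.of fun _ _ => c : Matrix (Fin m') (Fin n') ℝ)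
      = c * Real.sqrt ((m' : ℝ) * n') := by
  have h : (Matrix.of fun _ _ => c : Matrix (Fin m') (Fin n') ℝ)
      = Matrix.of fun i j => (fun _ : Fin m' => (1:ℝ)) i * (fun _ : Fin n' => c) j := by
    ext i j; simp
  rw [h, specNorm_rankOne]
  simp only [one_pow, Finset.sum_const, Finset.card_univ, Fintype.card_fin, nsmul_eq_mul,
    mul_one]
  rw [Real.sqrt_mul (by positivity), Real.sqrt_sq hc, Real.sqrt_mul (by positivity)]
  ring

lemma sqrt_four : Real.sqrt 4 = 2 := by
  rw [show (4:ℝ) = 2^2 by norm_num, Real.sqrt_sq (by norm_num)]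

end Aux

theorem statement_16 {k m' n' : ℕ} (hk : 2 ≤ k) (hm : 1 ≤ m') (hn : 1 ≤ n') :
    (egA22 k m' n' - egA21 k m' * (egA11 k)⁻¹ * egA12 k n' =
        Matrix.of fun _ _ => ((k : ℝ) + 2) / 2) ∧
    (sval (egA22 k m' n' - egA21 k m' * (egA11 k)⁻¹ * egA12 k n') 1 =
        ((k : ℝ) + 2) / 2 * Real.sqrt (m' * n')) ∧
    (sval (egA k m' n') (k + 1) ≤ 2) ∧
    (((k : ℝ) + 2) / 4 * Real.sqrt (m' * n') * sval (egA k m' n') (k + 1) ≤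
      sval (egA k m' n'
        - Matrix.fromBlocks (egA11 k) (egA12 k n') (egA21 k m')
            (egA21 k m' * (egA11 k)⁻¹ * egA12 k n')) 1) := by
  have hkR : (2:ℝ) ≤ (k:ℝ) := by exact_mod_cast hk
  have hnR : (1:ℝ) ≤ (n':ℝ) := by exact_mod_cast hn
  have hk0 : (0:ℝ) < (k:ℝ) := by linarith
  have hD0 : (0:ℝ) < ((k:ℝ)+1)^2 * (n':ℝ) + (k:ℝ) := by nlinarith
  -- part 3
  have h3 : sval (egA k m' n') (k + 1) ≤ 2 := by
    set D : ℝ := ((k:ℝ)+1)^2 * (n':ℝ) + (k:ℝ) with hD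
    set c1 : ℝ := ((k:ℝ)+1)*(n':ℝ)*((k:ℝ)+2)/((k:ℝ)*D) with hc1
    set c2 : ℝ := ((k:ℝ)+2)/D with hc2
    set u : Fin k ⊕ Fin m' → ℝ := Sum.elim (fun _ => 1) (fun _ => 0) with hu
    set w : Fin k ⊕ Fin n' → ℝ := Sum.elim (fun _ => c1) (fun _ => c2) with hw
    set C : Matrix (Fin k ⊕ Fin m') (Fin k ⊕ Fin n') ℝ :=
      Matrix.of fun i j => u i * w j with hC
    set B : Matrix (Fin k ⊕ Fin m') (Fin k ⊕ Fin n') ℝ := egA k m' n' - C with hB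
    set Q : Matrix (Fin k) (Fin k ⊕ Fin n') ℝ :=
      Matrix.of fun p j =>
        Sum.elim (fun q => if p = q then (1:ℝ) else 0) (fun _ => -(((k:ℝ)+1)/(k:ℝ))) j with hQ
    have hDne : D ≠ 0 := ne_of_gt hD0
    have hkne : (k:ℝ) ≠ 0 := ne_of_gt hk0
    have hBPQ : B = B.submatrix id Sum.inl * Q := by
      ext i j
      rw [Matrix.mul_apply]
      cases j with
      | inl q =>
        have : ∀ p ∈ Finset.univ, B.submatrix id Sum.inl i p * Q p (Sum.inl q)
            = if p = q then B i (Sum.inl p) else 0 := by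
          intro p _
          simp only [Matrix.submatrix_apply, id_eq, hQ, Matrix.of_apply, Sum.elim_inl]
          by_cases h : p = q <;> simp [h]
        rw [Finset.sum_congr rfl this]
        simp [Finset.sum_ite_eq']
      | inr q =>
        cases i with
        | inl a =>
          have hent : ∀ p, B (Sum.inl a) (Sum.inl p)
              = (if a = p then (k:ℝ)+1 else -1) - c1 := by
            intro p
            simp [hB, hC, egA, egA11, hu, hw]
          have : ∀ p ∈ Finset.univ, B.submatrix id Sum.inl (Sum.inl a) p * Q p (Sum.inr q)
              = ((if p = a then ((k:ℝ)+2) * (-(((k:ℝ)+1)/(k:ℝ))) else 0)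
                + (-1 - c1) * (-(((k:ℝ)+1)/(k:ℝ)))) := by
            intro p _
            simp only [Matrix.submatrix_apply, id_eq, hQ, Matrix.of_apply, Sum.elim_inr,
              hent p]
            by_cases h : a = p
            · subst h; simp; ring
            · have h' : p ≠ a := fun hh => h hh.symm
              simp [h, h']
          rw [Finset.sum_congr rfl this, sum_ite1]
          have hBr : B (Sum.inl a) (Sum.inr q) = -1 - c2 := by
            simp [hB, hC, egA, egA12, hu, hw]
          rw [hBr, hc1, hc2]
          field_simp
          ring
        | inr b =>
          have : ∀ p ∈ Finset.univ, B.submatrix id Sum.inl (Sum.inr b) p * Q p (Sum.inr q)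
              = ((k:ℝ)+1)/(k:ℝ) := by
            intro p _
            have : B (Sum.inr b) (Sum.inl p) = -1 := by
              simp [hB, hC, egA, egA21, hu, hw]
            simp only [Matrix.submatrix_apply, id_eq, hQ, Matrix.of_apply, Sum.elim_inr, this]
            ring
          rw [Finset.sum_congr rfl this, Finset.sum_const]
          have hBr : B (Sum.inr b) (Sum.inr q) = (k:ℝ)+1 := by
            simp [hB, hC, egA, egA22, hu, hw]
          rw [hBr]
          simp only [Finset.card_univ, Fintype.card_fin, nsmul_eq_mul]
          field_simp
    have hrank : B.rank < k + 1 := by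
      apply Nat.lt_succ_of_le
      calc B.rank = (B.submatrix id Sum.inl * Q).rank := by rw [← hBPQ]
        _ ≤ Q.rank := Matrix.rank_mul_le_right _ _
        _ ≤ Fintype.card (Fin k) := Q.rank_le_card_height
        _ = k := Fintype.card_fin k
    have hle := sval_le (egA k m' n') B (k+1) hrank
    have hsub : egA k m' n' - B = C := by rw [hB]; abel
    rw [hsub] at hle
    refine hle.trans ?_
    rw [hC, specNorm_rankOne]
    have hsu : ∑ i, u i ^ 2 = (k:ℝ) := by
      rw [Fintype.sum_sum_type]
      simp [hu]
    have hsw : ∑ j, w j ^ 2 = (k:ℝ)*c1^2 + (n':ℝ)*c2^2 := by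
      rw [Fintype.sum_sum_type]
      simp [hw, Finset.sum_const, Finset.card_univ, mul_comm]
    rw [hsu, hsw, ← Real.sqrt_mul (le_of_lt hk0)]
    have hkey : (k:ℝ) * ((k:ℝ)*c1^2 + (n':ℝ)*c2^2) ≤ 4 := by
      have hval : (k:ℝ) * ((k:ℝ)*c1^2 + (n':ℝ)*c2^2) = ((k:ℝ)+2)^2*(n':ℝ)/D := by
        rw [hc1, hc2]
        field_simp
        ring
      rw [hval, div_le_iff₀ hD0, hD]
      nlinarith [mul_nonneg (by nlinarith : (0:ℝ) ≤ 3*(k:ℝ)^2+4*(k:ℝ))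
        (by linarith : (0:ℝ) ≤ (n':ℝ))]
    calc Real.sqrt ((k:ℝ) * ((k:ℝ)*c1^2 + (n':ℝ)*c2^2)) ≤ Real.sqrt 4 :=
          Real.sqrt_le_sqrt hkey
      _ = 2 := sqrt_four
  refine ⟨schur_eq k m' n', ?_, h3, ?_⟩
  · rw [schur_eq, sval_one, specNorm_const _ _ _ (by positivity)]
  · have hM : egA k m' n'
        - Matrix.fromBlocks (egA11 k) (egA12 k n') (egA21 k m')
            (egA21 k m' * (egA11 k)⁻¹ * egA12 k n')
        = Matrix.of fun i j => (Sum.elim (fun _ => (0:ℝ)) (fun _ => 1) i)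
            * (Sum.elim (fun _ => (0:ℝ)) (fun _ => ((k:ℝ)+2)/2) j) := by
      have hs : ∀ i j, (egA22 k m' n' - egA21 k m' * (egA11 k)⁻¹ * egA12 k n') i j
          = ((k:ℝ)+2)/2 := by
        intro i j; rw [schur_eq]; rfl
      ext i j
      cases i with
      | inl a => cases j with
        | inl q => simp [egA]
        | inr q => simp [egA]
      | inr b => cases j with
        | inl q => simp [egA]
        | inr q =>
          have := hs b q
          rw [Matrix.sub_apply] at this ⊢
          simpa [egA] using this
    rw [hM, sval_one, specNorm_rankOne]
    have hsu : ∑ i : Fin k ⊕ Fin m', (Sum.elim (fun _ => (0:ℝ)) (fun _ => 1) i) ^ 2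
        = (m':ℝ) := by
      rw [Fintype.sum_sum_type]; simp
    have hsw : ∑ j : Fin k ⊕ Fin n',
        (Sum.elim (fun _ => (0:ℝ)) (fun _ => ((k:ℝ)+2)/2) j) ^ 2
        = (n':ℝ) * (((k:ℝ)+2)/2)^2 := by
      rw [Fintype.sum_sum_type]; simp [Finset.sum_const, Finset.card_univ, mul_comm]
    rw [hsu, hsw]
    have hrhs : Real.sqrt (m':ℝ) * Real.sqrt ((n':ℝ) * (((k:ℝ)+2)/2)^2)
        = ((k:ℝ)+2)/2 * Real.sqrt ((m':ℝ) * (n':ℝ)) := by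
      rw [Real.sqrt_mul (by positivity), Real.sqrt_sq (by positivity),
        Real.sqrt_mul (by positivity)]
      ring
    rw [hrhs]
    have hs0 := sval_nonneg (egA k m' n') (k+1)
    have hsq0 : (0:ℝ) ≤ Real.sqrt ((m':ℝ) * (n':ℝ)) := Real.sqrt_nonneg _
    set s : ℝ := sval (egA k m' n') (k+1) with hsdef
    set X : ℝ := Real.sqrt ((m':ℝ) * (n':ℝ)) with hXdef
    clear_value s X
    clear hM hrhs hsu hsw hsdef hXdef
    have hc4 : (0:ℝ) ≤ ((k:ℝ)+2)/4 * X := mul_nonneg (by linarith) hsq0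
    calc ((k:ℝ)+2)/4 * X * s ≤ ((k:ℝ)+2)/4 * X * 2 := mul_le_mul_of_nonneg_left h3 hc4
      _ = ((k:ℝ)+2)/2 * X := by ring
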